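/- Let R be a ring and A, B two right ideals of R with serial factorizations A = A_1⋯A_n and B = B_1⋯B_m respectively. If A ⊆ B, then there exists an injective mapping σ : {1, …, m} → {1, …, n} such that A_{σ(j)} ⊆ B_j for every j = 1, …, m. -/

import Mathlib

open MulOpposite

universe u

/-- The product `A·B` of two right ideals of `R` (right ideals are `Rᵐᵒᵖ`-submodules of `R`):
the set of all finite sums of products `a * b` with `a ∈ A`, `b ∈ B`. -/
def rmul {R : Type u} [Ring R] (A B : Submodule Rᵐᵒᵖ R) : Submodule Rᵐᵒᵖ R :=
  Submodule.span Rᵐᵒᵖ {x : R | ∃ a ∈ A, ∃ b ∈ B, x = a * b}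

/-- The product `A₁⋯Aₙ` of a (possibly empty) list of right ideals. -/
def rprod {R : Type u} [Ring R] : List (Submodule Rᵐᵒᵖ R) → Submodule Rᵐᵒᵖ R
  | [] => ⊤
  | [A] => A
  | A :: l => rmul A (rprod l)

/-- A finite family of right ideals is coindependent if `Aᵢ + ⋂_{j ≠ i} Aⱼ = R` for every `i`. -/
def Coindep {R : Type u} [Ring R] {n : ℕ} (A : Fin n → Submodule Rᵐᵒᵖ R) : Prop :=
  ∀ i, A i ⊔ (⨅ j, ⨅ (_ : j ≠ i), A j) = ⊤

/-- A module is uniserial if its submodules are linearly ordered by inclusion. -/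
def IsUniserialMod (S : Type*) [Ring S] (M : Type*) [AddCommGroup M] [Module S M] : Prop :=
  ∀ N P : Submodule S M, N ≤ P ∨ P ≤ N

/-- A right ideal is a two-sided ideal if it is also closed under left multiplication. -/
def IsTwoSidedRid {R : Type u} [Ring R] (A : Submodule Rᵐᵒᵖ R) : Prop :=
  ∀ (r : R), ∀ x ∈ A, r * x ∈ A

/-- A serial factorization of a right ideal `A`: a factorization `A = A₁⋯Aₙ` into proper
right ideals that pairwise commute, form a coindependent family, and are such that every
quotient `R/Aᵢ` is a uniserial right `R`-module. -/
def IsSerialFact {R : Type u} [Ring R] {n : ℕ} (A : Submodule Rᵐᵒᵖ R)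
    (F : Fin n → Submodule Rᵐᵒᵖ R) : Prop :=
  (∀ i, F i ≠ ⊤) ∧ (∀ i j, rmul (F i) (F j) = rmul (F j) (F i)) ∧ Coindep F ∧
    (∀ i, IsUniserialMod Rᵐᵒᵖ (R ⧸ F i)) ∧ A = rprod (List.ofFn F)

/-- A right ideal has a serial factorization if it admits one of some length. -/
def HasSerialFact {R : Type u} [Ring R] (A : Submodule Rᵐᵒᵖ R) : Prop :=
  ∃ (n : ℕ) (F : Fin n → Submodule Rᵐᵒᵖ R), IsSerialFact A F

/-- A right chain ring: its right ideals are linearly ordered by inclusion. -/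
def IsRightChainRing (R : Type u) [Ring R] : Prop :=
  ∀ A B : Submodule Rᵐᵒᵖ R, A ≤ B ∨ B ≤ A

/-- A ring is right duo if every right ideal is a two-sided ideal. -/
def IsRightDuo (R : Type u) [Ring R] : Prop :=
  ∀ A : Submodule Rᵐᵒᵖ R, IsTwoSidedRid A

/-- The principal right ideal `rR`. -/
def rspan {R : Type u} [Ring R] (r : R) : Submodule Rᵐᵒᵖ R :=
  Submodule.span Rᵐᵒᵖ ({r} : Set R)

section SerialAux
variable {R : Type u} [Ring R]

lemma mem_rmul {A B : Submodule Rᵐᵒᵖ R} {a b : R} (ha : a ∈ A) (hb : b ∈ B) :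
    a * b ∈ rmul A B :=
  Submodule.subset_span ⟨a, ha, b, hb, rfl⟩

lemma rmul_le {A B C : Submodule Rᵐᵒᵖ R} (h : ∀ a ∈ A, ∀ b ∈ B, a * b ∈ C) :
    rmul A B ≤ C := by
  apply Submodule.span_le.2
  rintro x ⟨a, ha, b, hb, rfl⟩
  exact h a ha b hb

lemma rmul_le_left {A B : Submodule Rᵐᵒᵖ R} : rmul A B ≤ A :=
  rmul_le fun a ha b _ => by
    rw [show a * b = op b • a from rfl]
    exact A.smul_mem _ ha

lemma rmul_top {A : Submodule Rᵐᵒᵖ R} : rmul A ⊤ = A :=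
  le_antisymm rmul_le_left fun a ha => by
    simpa using mem_rmul ha (Submodule.mem_top (x := (1:R)))

lemma rmul_assoc (A B C : Submodule Rᵐᵒᵖ R) :
    rmul (rmul A B) C = rmul A (rmul B C) := by
  apply le_antisymm
  · apply rmul_le
    intro x hx c hc
    have key : ∀ r : R, x * (r * c) ∈ rmul A (rmul B C) := by
      induction hx using Submodule.span_induction with
      | mem y hy =>
        obtain ⟨a, ha, b, hb, rfl⟩ := hy
        intro r
        rw [mul_assoc, ← mul_assoc b r c]
        exact mem_rmul ha (mem_rmul (B.smul_mem (op r) hb) hc)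
      | zero => intro r; simpa using (rmul A (rmul B C)).zero_mem
      | add y z hy hz ihy ihz => intro r; rw [add_mul]; exact add_mem (ihy r) (ihz r)
      | smul s y hy ih =>
        intro r
        have h1 : (s • y) * (r * c) = y * ((s.unop * r) * c) := by
          rw [show s • y = y * s.unop from rfl, mul_assoc, mul_assoc]
        rw [h1]
        exact ih (s.unop * r)
    simpa using key 1
  · apply rmul_le
    intro a ha y hy
    induction hy using Submodule.span_induction with
    | mem z hz =>
      obtain ⟨b, hb, c, hc, rfl⟩ := hz
      rw [← mul_assoc]
      exact mem_rmul (mem_rmul ha hb) hc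
    | zero => simpa using (rmul (rmul A B) C).zero_mem
    | add y z hy hz ihy ihz => rw [mul_add]; exact add_mem ihy ihz
    | smul s y hy ih =>
      have h1 : a * (s • y) = s • (a * y) := by
        rw [show s • y = y * s.unop from rfl, show s • (a * y) = (a * y) * s.unop from rfl,
          mul_assoc]
      rw [h1]
      exact Submodule.smul_mem _ _ ih

lemma rprod_nil : rprod ([] : List (Submodule Rᵐᵒᵖ R)) = ⊤ := rfl

lemma rprod_singleton (A : Submodule Rᵐᵒᵖ R) : rprod [A] = A := rfl

lemma rprod_cons (A : Submodule Rᵐᵒᵖ R) (l : List (Submodule Rᵐᵒᵖ R)) :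
    rprod (A :: l) = rmul A (rprod l) := by
  cases l with
  | nil => rw [rprod_singleton, rprod_nil, rmul_top]
  | cons B l => rfl

lemma rid_eq_top {A : Submodule Rᵐᵒᵖ R} (h : (1:R) ∈ A) : A = ⊤ :=
  Submodule.eq_top_iff'.2 fun x => by
    have := A.smul_mem (op x) h
    rwa [op_smul_eq_mul, one_mul] at this

lemma rprod_sup_eq_top {G : Submodule Rᵐᵒᵖ R} :
    ∀ {l : List (Submodule Rᵐᵒᵖ R)}, (∀ X ∈ l, X ⊔ G = ⊤) → rprod l ⊔ G = ⊤
  | [], _ => by rw [rprod_nil, top_sup_eq]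
  | A :: l, h => by
    have hA : A ⊔ G = ⊤ := h A List.mem_cons_self
    have hP : rprod l ⊔ G = ⊤ :=
      rprod_sup_eq_top fun X hX => h X (List.mem_cons_of_mem _ hX)
    rw [rprod_cons]
    apply rid_eq_top
    have h1 : (1:R) ∈ rprod l ⊔ G := hP ▸ Submodule.mem_top
    obtain ⟨p, hp, g, hg, hpg⟩ := Submodule.mem_sup.1 h1
    have h2 : (1:R) ∈ A ⊔ G := hA ▸ Submodule.mem_top
    obtain ⟨a, ha, g', hg', hag⟩ := Submodule.mem_sup.1 h2
    refine Submodule.mem_sup.2 ⟨a * p, mem_rmul ha hp, g' * p + g, ?_, ?_⟩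
    · refine add_mem ?_ hg
      rw [show g' * p = op p • g' from rfl]
      exact G.smul_mem _ hg'
    · have : a * p + (g' * p + g) = (a + g') * p + g := by
        rw [add_mul, add_assoc]
      rw [this, hag, one_mul, hpg]

lemma rmul_rprod_comm {A : Submodule Rᵐᵒᵖ R} :
    ∀ {l : List (Submodule Rᵐᵒᵖ R)}, l ≠ [] → (∀ X ∈ l, rmul A X = rmul X A) →
      rmul A (rprod l) = rmul (rprod l) A
  | [], h, _ => absurd rfl h
  | [X], _, h => by rw [rprod_singleton]; exact h X (by simp)
  | X :: Y :: l, _, h => by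
    have hX : rmul A X = rmul X A := h X (by simp)
    have ih : rmul A (rprod (Y :: l)) = rmul (rprod (Y :: l)) A :=
      rmul_rprod_comm (by simp) (fun Z hZ => h Z (List.mem_cons_of_mem _ hZ))
    rw [rprod_cons X (Y :: l), ← rmul_assoc A X (rprod (Y :: l)), hX,
      rmul_assoc X A (rprod (Y :: l)), ih, ← rmul_assoc X (rprod (Y :: l)) A]

lemma rprod_le_of_mem :
    ∀ {l : List (Submodule Rᵐᵒᵖ R)}, (∀ X ∈ l, ∀ Y ∈ l, rmul X Y = rmul Y X) →
      ∀ X ∈ l, rprod l ≤ X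
  | [], _, X, hX => absurd hX (by simp)
  | A :: l, h, X, hX => by
    rw [rprod_cons]
    rcases List.mem_cons.1 hX with rfl | hX'
    · exact rmul_le_left
    · have hl : l ≠ [] := by rintro rfl; simp at hX'
      have hcomm : rmul A (rprod l) = rmul (rprod l) A :=
        rmul_rprod_comm hl fun Z hZ => h A (by simp) Z (by simp [hZ])
      calc rmul A (rprod l) = rmul (rprod l) A := hcomm
        _ ≤ rprod l := rmul_le_left
        _ ≤ X := rprod_le_of_mem (fun U hU V hV => h U (by simp [hU]) V (by simp [hV])) X hX'

lemma mem_rprod_of_forall :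
    ∀ {l : List (Submodule Rᵐᵒᵖ R)}, (∀ X ∈ l, ∀ Y ∈ l, rmul X Y = rmul Y X) →
      l.Pairwise (fun X Y => X ⊔ Y = ⊤) → ∀ x : R, (∀ X ∈ l, x ∈ X) → x ∈ rprod l
  | [], _, _, x, _ => Submodule.mem_top
  | [A], _, _, x, hx => by rw [rprod_singleton]; exact hx A (by simp)
  | A :: B :: l, hcomm, hpair, x, hx => by
    rw [rprod_cons]
    have hl'ne : (B :: l) ≠ ([] : List (Submodule Rᵐᵒᵖ R)) := by simp
    have hAsup : ∀ X ∈ B :: l, X ⊔ A = ⊤ := fun X hX => by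
      rw [sup_comm]; exact (List.pairwise_cons.1 hpair).1 X hX
    have hPA : rprod (B :: l) ⊔ A = ⊤ := rprod_sup_eq_top hAsup
    obtain ⟨p, hp, a, ha, hpa⟩ :=
      Submodule.mem_sup.1 (show (1:R) ∈ rprod (B :: l) ⊔ A from hPA ▸ Submodule.mem_top)
    have hcomm' : rmul A (rprod (B :: l)) = rmul (rprod (B :: l)) A :=
      rmul_rprod_comm hl'ne fun Z hZ => hcomm A (by simp) Z (by simp [hZ])
    have hxP : x ∈ rprod (B :: l) :=
      mem_rprod_of_forall (fun U hU V hV => hcomm U (by simp [hU]) V (by simp [hV]))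
        (List.pairwise_cons.1 hpair).2 x (fun X hX => hx X (by simp [hX]))
    have hxA : x ∈ A := hx A (by simp)
    have hxeq : x = p * x + a * x := by rw [← add_mul, hpa, one_mul]
    rw [hxeq]
    refine add_mem ?_ (mem_rmul ha hxP)
    rw [hcomm']
    exact mem_rmul hp hxA

lemma coindep_sup_eq_top {n : ℕ} {F : Fin n → Submodule Rᵐᵒᵖ R} (h : Coindep F)
    {i j : Fin n} (hij : i ≠ j) : F i ⊔ F j = ⊤ := by
  have hle : (⨅ k, ⨅ _ : k ≠ i, F k) ≤ F j :=
    (iInf_le _ j).trans (iInf_le _ (Ne.symm hij))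
  exact top_unique ((h i).symm.trans_le (sup_le_sup_left hle _))

lemma sup_comparable_of_uniserial {Gj : Submodule Rᵐᵒᵖ R}
    (h : IsUniserialMod Rᵐᵒᵖ (R ⧸ Gj)) (X Y : Submodule Rᵐᵒᵖ R) :
    X ⊔ Gj ≤ Y ⊔ Gj ∨ Y ⊔ Gj ≤ X ⊔ Gj := by
  rcases h (X.map Gj.mkQ) (Y.map Gj.mkQ) with h' | h'
  · left
    have := Submodule.comap_mono (f := Gj.mkQ) h'
    rwa [Submodule.comap_map_mkQ, Submodule.comap_map_mkQ, sup_comm Gj X, sup_comm Gj Y] at this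
  · right
    have := Submodule.comap_mono (f := Gj.mkQ) h'
    rwa [Submodule.comap_map_mkQ, Submodule.comap_map_mkQ, sup_comm Gj X, sup_comm Gj Y] at this

end SerialAux

/-- Corollary: if `A = A₁⋯Aₙ` and `B = B₁⋯Bₘ` are serial factorizations and `A ⊆ B`, then
there is an injective map `σ : {1, …, m} → {1, …, n}` with `A_{σ(j)} ⊆ Bⱼ` for all `j`. -/
theorem statement9 {R : Type u} [Ring R] [Nontrivial R] {n m : ℕ}
    (A B : Submodule Rᵐᵒᵖ R)
    (F : Fin n → Submodule Rᵐᵒᵖ R) (G : Fin m → Submodule Rᵐᵒᵖ R)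
    (hF : IsSerialFact A F) (hG : IsSerialFact B G) (hAB : A ≤ B) :
    ∃ σ : Fin m → Fin n, Function.Injective σ ∧ ∀ j, F (σ j) ≤ G j := by
  obtain ⟨hFprop, hFcomm, hFcoind, hFuni, hFeq⟩ := hF
  obtain ⟨hGprop, hGcomm, hGcoind, hGuni, hGeq⟩ := hG
  have hFsup : ∀ {i j : Fin n}, i ≠ j → F i ⊔ F j = ⊤ := fun h => coindep_sup_eq_top hFcoind h
  have hGsup : ∀ {j j' : Fin m}, j ≠ j' → G j ⊔ G j' = ⊤ := fun h => coindep_sup_eq_top hGcoind h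
  have hcommF : ∀ X ∈ List.ofFn F, ∀ Y ∈ List.ofFn F, rmul X Y = rmul Y X := by
    intro X hX Y hY
    obtain ⟨i, rfl⟩ := Set.mem_range.1 (List.mem_ofFn.1 hX)
    obtain ⟨j, rfl⟩ := Set.mem_range.1 (List.mem_ofFn.1 hY)
    exact hFcomm i j
  have hcommG : ∀ X ∈ List.ofFn G, ∀ Y ∈ List.ofFn G, rmul X Y = rmul Y X := by
    intro X hX Y hY
    obtain ⟨i, rfl⟩ := Set.mem_range.1 (List.mem_ofFn.1 hX)
    obtain ⟨j, rfl⟩ := Set.mem_range.1 (List.mem_ofFn.1 hY)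
    exact hGcomm i j
  have hAleG : ∀ j, A ≤ G j := by
    intro j
    refine hAB.trans ?_
    rw [hGeq]
    exact rprod_le_of_mem hcommG (G j) (List.mem_ofFn.2 ⟨j, rfl⟩)
  have hintF : ∀ x : R, (∀ i, x ∈ F i) → x ∈ A := by
    intro x hx
    rw [hFeq]
    refine mem_rprod_of_forall hcommF ?_ x ?_
    · exact List.pairwise_ofFn.2 fun i j hij => hFsup (Fin.ne_of_lt hij)
    · intro X hX
      obtain ⟨i, rfl⟩ := Set.mem_range.1 (List.mem_ofFn.1 hX)
      exact hx i
  have hTex : ∀ j, ∃ i, F i ⊔ G j ≠ ⊤ := by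
    intro j
    by_contra h
    push_neg at h
    have h1 : rprod (List.ofFn F) ⊔ G j = ⊤ := by
      refine rprod_sup_eq_top fun X hX => ?_
      obtain ⟨i, rfl⟩ := Set.mem_range.1 (List.mem_ofFn.1 hX)
      exact h i
    rw [← hFeq, sup_eq_right.2 (hAleG j)] at h1
    exact hGprop j h1
  choose σ hσ using hTex
  have hTuniq : ∀ j i, F i ⊔ G j ≠ ⊤ → i = σ j := by
    intro j i hi
    by_contra hne
    have hsup : F i ⊔ F (σ j) = ⊤ := hFsup hne
    rcases sup_comparable_of_uniserial (hGuni j) (F i) (F (σ j)) with h' | h'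
    · refine hσ j (top_unique ?_)
      rw [← hsup]
      exact sup_le (le_sup_left.trans h') le_sup_left
    · refine hi (top_unique ?_)
      rw [← hsup]
      exact sup_le le_sup_left (le_sup_left.trans h')
  have hmain : ∀ j, F (σ j) ≤ G j := by
    intro j
    by_cases hall : ∀ i, i = σ j
    · intro x hx
      exact hAleG j (hintF x fun i => (hall i) ▸ hx)
    · push_neg at hall
      obtain ⟨i1, hi1⟩ := hall
      set l' : List (Submodule Rᵐᵒᵖ R) :=
        ((List.finRange n).filter (fun i => decide (i ≠ σ j))).map F with hl'
      have hmem' : ∀ {X : Submodule Rᵐᵒᵖ R}, X ∈ l' ↔ ∃ i, i ≠ σ j ∧ F i = X := by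
        intro X
        simp [hl', List.mem_map, List.mem_filter, List.mem_finRange, and_comm]
      have hl'ne : l' ≠ [] := by
        intro h0
        have : F i1 ∈ l' := hmem'.2 ⟨i1, hi1, rfl⟩
        rw [h0] at this
        simp at this
      have hcomm' : ∀ X ∈ l', ∀ Y ∈ l', rmul X Y = rmul Y X := by
        intro X hX Y hY
        obtain ⟨i, _, rfl⟩ := hmem'.1 hX
        obtain ⟨k, _, rfl⟩ := hmem'.1 hY
        exact hFcomm i k
      have hCG : rprod l' ⊔ G j = ⊤ := by
        refine rprod_sup_eq_top fun X hX => ?_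
        obtain ⟨i, hi, rfl⟩ := hmem'.1 hX
        by_contra hc
        exact hi (hTuniq j i hc)
      have hCcomm : rmul (F (σ j)) (rprod l') = rmul (rprod l') (F (σ j)) := by
        refine rmul_rprod_comm hl'ne fun X hX => ?_
        obtain ⟨i, _, rfl⟩ := hmem'.1 hX
        exact hFcomm (σ j) i
      have hCle : ∀ i, i ≠ σ j → rprod l' ≤ F i := fun i hi =>
        rprod_le_of_mem hcomm' (F i) (hmem'.2 ⟨i, hi, rfl⟩)
      intro x hx
      obtain ⟨c, hc, g, hg, hcg⟩ :=
        Submodule.mem_sup.1 (show (1:R) ∈ rprod l' ⊔ G j from hCG ▸ Submodule.mem_top)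
      have hxeq : x = c * x + g * x := by rw [← add_mul, hcg, one_mul]
      have hcx : c * x ∈ A := by
        refine hintF _ fun i => ?_
        by_cases hii : i = σ j
        · subst hii
          have hmem2 : c * x ∈ rmul (rprod l') (F (σ j)) := mem_rmul hc hx
          rw [← hCcomm] at hmem2
          exact rmul_le_left hmem2
        · exact hCle i hii (rmul_le_left (mem_rmul hc hx))
      rw [hxeq]
      refine add_mem (hAleG j hcx) ?_
      rw [show g * x = op x • g from rfl]
      exact (G j).smul_mem _ hg
  refine ⟨σ, ?_, hmain⟩
  intro j j' hjj'
  by_contra hne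
  have h1 : F (σ j) ≤ G j := hmain j
  have h2 : F (σ j) ≤ G j' := by rw [hjj']; exact hmain j'
  rcases sup_comparable_of_uniserial (hFuni (σ j)) (G j) (G j') with h' | h'
  · rw [sup_eq_left.2 h1, sup_eq_left.2 h2] at h'
    exact hGprop j' (by rw [← hGsup hne, sup_eq_right.2 h'])
  · rw [sup_eq_left.2 h1, sup_eq_left.2 h2] at h'
    exact hGprop j (by rw [← hGsup hne, sup_eq_left.2 h'])
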